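/- arXiv:1801.06366 — 4 statements merged into one kernel-verified Lean document; each statement's English description precedes it below -/
import Mathlib

section
/- Let T > 0, a, b ∈ L¹(t₀, t₀+T; ℝ) with b(t) ≥ 0 a.e., and 0 ≤ α < 1. If an absolutely continuous function w : [t₀, t₀+T] → ℝ₊ satisfies (1−α)·w′(t) ≤ a(t)·w(t) + b(t)·w(t)^α for a.e. t, then w(t)^{1−α} ≤ w(t₀)^{1−α}·exp(∫_{t₀}^t a(τ)dτ) + ∫_{t₀}^t exp(∫_s^t a(τ)dτ)·b(s) ds for all t ∈ [t₀, t₀+T]. -/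
open MeasureTheory Set intervalIntegral Filter Topology

namespace GronA



/-- `Rep c d f f₀` : on `[c,d]`, `f` is the integral of the integrable function `f₀`. -/
def Rep (c d : ℝ) (f f₀ : ℝ → ℝ) : Prop :=
  IntegrableOn f₀ (Icc c d) ∧ ∀ t ∈ Icc c d, f t = f c + ∫ s in c..t, f₀ s

variable {c d : ℝ} {f f₀ g g₀ : ℝ → ℝ}

lemma ii_of_integrableOn (h : IntegrableOn f₀ (Icc c d)) {u v : ℝ}
    (hu : u ∈ Icc c d) (hv : v ∈ Icc c d) : IntervalIntegrable f₀ volume u v :=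
  (h.mono_set (uIcc_subset_Icc hu hv)).intervalIntegrable

lemma Rep.continuousOn (hcd : c ≤ d) (h : Rep c d f f₀) : ContinuousOn f (Icc c d) := by
  have h1 : ContinuousOn (fun t => f c + ∫ s in c..t, f₀ s) (Icc c d) := by
    apply ContinuousOn.add continuousOn_const
    have h2 : IntegrableOn f₀ (uIcc c d) := by rw [uIcc_of_le hcd]; exact h.1
    have := intervalIntegral.continuousOn_primitive_interval (a := c) (b := d)
      (μ := volume) h2
    rwa [uIcc_of_le hcd] at this
  exact ContinuousOn.congr h1 h.2

lemma Rep.add (h : Rep c d f f₀) (h' : Rep c d g g₀) :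
    Rep c d (fun t => f t + g t) (fun t => f₀ t + g₀ t) := by
  refine ⟨h.1.add h'.1, fun t ht => ?_⟩
  have hc : c ∈ Icc c d := ⟨le_refl _, ht.1.trans ht.2⟩
  show f t + g t = f c + g c + ∫ s in c..t, f₀ s + g₀ s
  rw [integral_add (ii_of_integrableOn h.1 hc ht) (ii_of_integrableOn h'.1 hc ht),
    h.2 t ht, h'.2 t ht]
  ring

lemma Rep.const_mul (h : Rep c d f f₀) (r : ℝ) :
    Rep c d (fun t => r * f t) (fun t => r * f₀ t) := by
  refine ⟨h.1.const_mul r, fun t ht => ?_⟩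
  show r * f t = r * f c + ∫ s in c..t, r * f₀ s
  rw [intervalIntegral.integral_const_mul, h.2 t ht]
  ring

lemma Rep.congr (h : Rep c d f f₀) (hfg : ∀ t, f t = g t)
    (hint : ∀ s ∈ Icc c d, f₀ s = g₀ s) : Rep c d g g₀ := by
  constructor
  · exact h.1.congr_fun (fun x hx => hint x hx) measurableSet_Icc
  · intro t ht
    have hc : c ∈ Icc c d := ⟨le_refl _, ht.1.trans ht.2⟩
    rw [← hfg t, ← hfg c, h.2 t ht]
    congr 1
    apply intervalIntegral.integral_congr
    intro x hx
    exact hint x (uIcc_subset_Icc hc ht hx)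

lemma Rep.sub (h : Rep c d f f₀) (h' : Rep c d g g₀) :
    Rep c d (fun t => f t - g t) (fun t => f₀ t - g₀ t) :=
  (h.add (h'.const_mul (-1))).congr (fun t => by ring) (fun s _ => by ring)


lemma comp_endpoint (hcd : c ≤ d) (hf : Rep c d f f₀)
    {φ φ' : ℝ → ℝ} {U : Set ℝ} {δ C : ℝ} (hδ : 0 < δ)
    (hball : ∀ t ∈ Icc c d, Metric.ball (f t) δ ⊆ U)
    (hφ : ∀ x ∈ U, HasDerivAt φ (φ' x) x)
    (hφ'c : ContinuousOn φ' U)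
    (hC : ∀ x ∈ U, |φ' x| ≤ C) :
    φ (f d) = φ (f c) + ∫ s in c..d, φ' (f s) * f₀ s := by
  have hcI : c ∈ Icc c d := ⟨le_rfl, hcd⟩
  have hdI : d ∈ Icc c d := ⟨hcd, le_rfl⟩
  have hfU : ∀ t ∈ Icc c d, f t ∈ U := fun t ht => hball t ht (Metric.mem_ball_self hδ)
  -- approximating sequence
  have happ : ∀ n : ℕ, ∃ g : ℝ → ℝ, Continuous g ∧
      (∫ s in Icc c d, |f₀ s - g s|) ≤ min (1/((n:ℝ)+1)) (δ/2) := by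
    intro n
    have hpos : 0 < min (1/((n:ℝ)+1)) (δ/2) := lt_min (by positivity) (by positivity)
    have hind : Integrable ((Icc c d).indicator f₀) volume :=
      (integrable_indicator_iff measurableSet_Icc).2 hf.1
    obtain ⟨g, -, hg2, hgc, hgi⟩ := hind.exists_hasCompactSupport_integral_sub_le hpos
    refine ⟨g, hgc, ?_⟩
    calc (∫ s in Icc c d, |f₀ s - g s|)
        = ∫ s in Icc c d, ‖(Icc c d).indicator f₀ s - g s‖ := by
          apply setIntegral_congr_fun measurableSet_Icc
          intro x hx
          simp only [indicator_of_mem hx, Real.norm_eq_abs]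
      _ ≤ ∫ s, ‖(Icc c d).indicator f₀ s - g s‖ :=
          setIntegral_le_integral (hind.sub hgi).norm (ae_of_all _ fun x => norm_nonneg _)
      _ ≤ _ := hg2
  choose g hgcont hgest using happ
  set F : ℕ → ℝ → ℝ := fun n t => f c + ∫ s in c..t, g n s with hF
  have hFderiv : ∀ n x, HasDerivAt (F n) (g n x) x := by
    intro n x
    exact (intervalIntegral.integral_hasDerivAt_right ((hgcont n).intervalIntegrable c x)
      ((hgcont n).stronglyMeasurableAtFilter volume _) (hgcont n).continuousAt).const_add (f c)
  have hFcont : ∀ n, Continuous (F n) := fun n =>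
    continuous_iff_continuousAt.2 fun x => (hFderiv n x).continuousAt
  have hFc : ∀ n, F n c = f c := by intro n; simp [hF]
  have hsub : ∀ n, IntegrableOn (fun s => g n s - f₀ s) (Icc c d) := fun n =>
    ((hgcont n).integrableOn_Icc).sub hf.1
  have hsubabs : ∀ n, IntegrableOn (fun s => |g n s - f₀ s|) (Icc c d) := fun n => (hsub n).abs
  -- sup estimate
  have est : ∀ n, ∀ t ∈ Icc c d, |F n t - f t| ≤ min (1/((n:ℝ)+1)) (δ/2) := by
    intro n t ht
    have h1 : F n t - f t = ∫ s in c..t, (g n s - f₀ s) := by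
      rw [hf.2 t ht, hF]
      rw [intervalIntegral.integral_sub ((hgcont n).intervalIntegrable c t)
        (ii_of_integrableOn hf.1 hcI ht)]
      ring
    have hgint : IntegrableOn (fun s => |g n s - f₀ s|) (Icc c d) :=
      (hsub n).abs
    rw [h1]
    calc |∫ s in c..t, (g n s - f₀ s)|
        ≤ ∫ s in Ioc c t, |g n s - f₀ s| := by
          rw [intervalIntegral.integral_of_le ht.1]
          simpa [Real.norm_eq_abs] using
            MeasureTheory.norm_integral_le_integral_norm (μ := volume.restrict (Ioc c t))
              (fun s => g n s - f₀ s)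
      _ ≤ ∫ s in Icc c d, |g n s - f₀ s| := by
          apply setIntegral_mono_set hgint
            (ae_of_all _ fun x => abs_nonneg _)
          exact HasSubset.Subset.eventuallyLE ((Ioc_subset_Icc_self).trans (Icc_subset_Icc_right ht.2))
      _ = ∫ s in Icc c d, |f₀ s - g n s| := by
          apply setIntegral_congr_fun measurableSet_Icc
          intro x _
          exact abs_sub_comm _ _
      _ ≤ _ := hgest n
  have hFU : ∀ n, ∀ t ∈ Icc c d, F n t ∈ U := by
    intro n t ht
    apply hball t ht
    rw [Metric.mem_ball, Real.dist_eq]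
    exact lt_of_le_of_lt ((est n t ht).trans (min_le_right _ _)) (half_lt_self hδ)
  -- FTC for each n
  have ftc : ∀ n, φ (F n d) = φ (f c) + ∫ s in c..d, φ' (F n s) * g n s := by
    intro n
    have hderiv : ∀ x ∈ uIcc c d, HasDerivAt (fun t => φ (F n t)) (φ' (F n x) * g n x) x := by
      intro x hx
      rw [uIcc_of_le hcd] at hx
      exact (hφ _ (hFU n x hx)).comp x (hFderiv n x)
    have hint : IntervalIntegrable (fun s => φ' (F n s) * g n s) volume c d := by
      apply ContinuousOn.intervalIntegrable
      apply ContinuousOn.mul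
      · apply hφ'c.comp (hFcont n).continuousOn
        intro x hx
        rw [uIcc_of_le hcd] at hx
        exact hFU n x hx
      · exact (hgcont n).continuousOn
    have h2 := intervalIntegral.integral_eq_sub_of_hasDerivAt hderiv hint
    rw [h2, hFc n]
    ring
  -- limits
  have hlim0 : Tendsto (fun n : ℕ => min (1/((n:ℝ)+1)) (δ/2)) atTop (𝓝 0) := by
    apply squeeze_zero (fun n => le_min (by positivity) (by positivity)) (fun n => min_le_left _ _)
    exact tendsto_one_div_add_atTop_nhds_zero_nat
  have hFlim : ∀ t ∈ Icc c d, Tendsto (fun n => F n t) atTop (𝓝 (f t)) := by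
    intro t ht
    rw [tendsto_iff_dist_tendsto_zero]
    apply squeeze_zero (fun n => dist_nonneg) (fun n => ?_) hlim0
    rw [Real.dist_eq]
    exact est n t ht
  have limLHS : Tendsto (fun n => φ (F n d)) atTop (𝓝 (φ (f d))) :=
    ((hφ _ (hfU d hdI)).continuousAt.tendsto).comp (hFlim d hdI)
  -- integrability of pieces
  have hmeasn : ∀ n, AEStronglyMeasurable (fun s => φ' (F n s))
      (volume.restrict (Ioc c d)) := by
    intro n
    apply ContinuousOn.aestronglyMeasurable _ measurableSet_Ioc
    apply hφ'c.comp (hFcont n).continuousOn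
    intro x hx
    exact hFU n x (Ioc_subset_Icc_self hx)
  have habs : ∀ n, ∀ᵐ s ∂(volume.restrict (Ioc c d)), ‖φ' (F n s)‖ ≤ C := by
    intro n
    filter_upwards [ae_restrict_mem measurableSet_Ioc] with s hs
    rw [Real.norm_eq_abs]
    exact hC _ (hFU n s (Ioc_subset_Icc_self hs))
  have int2 : ∀ n, Integrable (fun s => φ' (F n s) * f₀ s) (volume.restrict (Ioc c d)) := by
    intro n
    exact Integrable.bdd_mul (hf.1.mono_set Ioc_subset_Icc_self) (hmeasn n) (habs n)
  have int1 : ∀ n, Integrable (fun s => φ' (F n s) * (g n s - f₀ s))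
      (volume.restrict (Ioc c d)) := by
    intro n
    exact Integrable.bdd_mul
      (IntegrableOn.mono_set (hsub n) Ioc_subset_Icc_self) (hmeasn n) (habs n)
  have hC0 : 0 ≤ C := le_trans (abs_nonneg _) (hC _ (hfU c hcI))
  -- T1 : error term tends to zero
  have T1 : Tendsto (fun n => ∫ s in Ioc c d, φ' (F n s) * (g n s - f₀ s)) atTop (𝓝 0) := by
    have hlim0' : Tendsto (fun n : ℕ => C * (min (1/((n:ℝ)+1)) (δ/2))) atTop (𝓝 0) := by
      have := hlim0.const_mul C
      rwa [mul_zero] at this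
    apply squeeze_zero_norm (fun n => ?_) hlim0'
    calc ‖∫ s in Ioc c d, φ' (F n s) * (g n s - f₀ s)‖
        ≤ ∫ s in Ioc c d, C * |g n s - f₀ s| := by
          apply MeasureTheory.norm_integral_le_of_norm_le
            ((IntegrableOn.mono_set (hsubabs n) Ioc_subset_Icc_self).const_mul C)
          filter_upwards [habs n] with s hs
          rw [Real.norm_eq_abs, abs_mul]
          exact mul_le_mul_of_nonneg_right (by rwa [Real.norm_eq_abs] at hs) (abs_nonneg _)
      _ = C * ∫ s in Ioc c d, |g n s - f₀ s| := by rw [MeasureTheory.integral_const_mul]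
      _ ≤ C * min (1/((n:ℝ)+1)) (δ/2) := by
          apply mul_le_mul_of_nonneg_left _ hC0
          calc (∫ s in Ioc c d, |g n s - f₀ s|)
              ≤ ∫ s in Icc c d, |g n s - f₀ s| := by
                apply setIntegral_mono_set (hsubabs n)
                  (ae_of_all _ fun x => abs_nonneg _)
                exact HasSubset.Subset.eventuallyLE Ioc_subset_Icc_self
            _ = ∫ s in Icc c d, |f₀ s - g n s| := by
                apply setIntegral_congr_fun measurableSet_Icc
                intro x _
                exact abs_sub_comm _ _
            _ ≤ _ := hgest n
  -- T2 : dominated convergence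
  have T2 : Tendsto (fun n => ∫ s in Ioc c d, φ' (F n s) * f₀ s) atTop
      (𝓝 (∫ s in Ioc c d, φ' (f s) * f₀ s)) := by
    apply tendsto_integral_of_dominated_convergence (fun s => C * |f₀ s|)
      (fun n => (int2 n).aestronglyMeasurable)
      (((hf.1.mono_set Ioc_subset_Icc_self).abs).const_mul C)
    · intro n
      filter_upwards [habs n] with s hs
      rw [Real.norm_eq_abs, abs_mul]
      exact mul_le_mul_of_nonneg_right (by rwa [Real.norm_eq_abs] at hs) (abs_nonneg _)
    · filter_upwards [ae_restrict_mem measurableSet_Ioc] with s hs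
      have hsI : s ∈ Icc c d := Ioc_subset_Icc_self hs
      have hcont : ContinuousAt φ' (f s) := by
        apply hφ'c.continuousAt
        exact Filter.mem_of_superset (Metric.ball_mem_nhds _ hδ) (hball s hsI)
      exact (hcont.tendsto.comp (hFlim s hsI)).mul_const (f₀ s)
  -- combine
  have hsplit : ∀ n, (∫ s in c..d, φ' (F n s) * g n s)
      = (∫ s in Ioc c d, φ' (F n s) * (g n s - f₀ s)) + ∫ s in Ioc c d, φ' (F n s) * f₀ s := by
    intro n
    rw [intervalIntegral.integral_of_le hcd, ← integral_add (int1 n) (int2 n)]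
    apply setIntegral_congr_fun measurableSet_Ioc
    intro x _
    ring
  have limI : Tendsto (fun n => ∫ s in c..d, φ' (F n s) * g n s) atTop
      (𝓝 (∫ s in c..d, φ' (f s) * f₀ s)) := by
    rw [intervalIntegral.integral_of_le hcd]
    simp only [hsplit]
    simpa using T1.add T2
  have limRHS : Tendsto (fun n => φ (F n d)) atTop
      (𝓝 (φ (f c) + ∫ s in c..d, φ' (f s) * f₀ s)) := by
    simp only [ftc]
    exact tendsto_const_nhds.add limI
  exact tendsto_nhds_unique limLHS limRHS


lemma Rep.comp (hcd : c ≤ d) (hf : Rep c d f f₀)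
    {φ φ' : ℝ → ℝ} {U : Set ℝ} {δ C : ℝ} (hδ : 0 < δ)
    (hball : ∀ t ∈ Icc c d, Metric.ball (f t) δ ⊆ U)
    (hφ : ∀ x ∈ U, HasDerivAt φ (φ' x) x)
    (hφ'c : ContinuousOn φ' U)
    (hC : ∀ x ∈ U, |φ' x| ≤ C) :
    Rep c d (fun t => φ (f t)) (fun s => φ' (f s) * f₀ s) := by
  have hfU : ∀ t ∈ Icc c d, f t ∈ U := fun t ht => hball t ht (Metric.mem_ball_self hδ)
  constructor
  · apply Integrable.bdd_mul (c := C) hf.1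
    · apply ContinuousOn.aestronglyMeasurable _ measurableSet_Icc
      exact hφ'c.comp (hf.continuousOn hcd) hfU
    · filter_upwards [ae_restrict_mem measurableSet_Icc] with s hs
      rw [Real.norm_eq_abs]
      exact hC _ (hfU s hs)
  · intro t ht
    have hsubset : Icc c t ⊆ Icc c d := Icc_subset_Icc_right ht.2
    have hf' : Rep c t f f₀ := ⟨hf.1.mono_set hsubset, fun u hu => hf.2 u (hsubset hu)⟩
    exact comp_endpoint ht.1 hf' hδ (fun u hu => hball u (hsubset hu)) hφ hφ'c hC

lemma Rep.sq (hcd : c ≤ d) (hp : Rep c d f f₀) :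
    Rep c d (fun t => f t * f t) (fun s => (f s + f s) * f₀ s) := by
  obtain ⟨R, hR⟩ := (isCompact_Icc).exists_bound_of_continuousOn (hp.continuousOn hcd)
  have hR0 : 0 ≤ R := le_trans (norm_nonneg _) (hR c ⟨le_rfl, hcd⟩)
  apply Rep.comp hcd hp (φ := fun x => x * x) (φ' := fun x => x + x)
      (U := Metric.ball (0:ℝ) (R+1)) (δ := 1) (C := 2*(R+1)) one_pos
  · intro t ht x hx
    rw [Metric.mem_ball] at hx ⊢
    have h1 : dist x 0 ≤ dist x (f t) + dist (f t) 0 := dist_triangle _ _ _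
    have h2 : dist (f t) 0 ≤ R := by
      rw [Real.dist_eq, sub_zero, ← Real.norm_eq_abs]
      exact hR t ht
    linarith
  · intro x _
    have := (hasDerivAt_id x).mul (hasDerivAt_id x)
    exact this.congr_deriv (by simp)
  · exact (continuous_id.add continuous_id).continuousOn
  · intro x hx
    rw [Metric.mem_ball, Real.dist_eq, sub_zero] at hx
    calc |x + x| ≤ |x| + |x| := abs_add_le _ _
      _ ≤ 2*(R+1) := by linarith

lemma Rep.mul (hcd : c ≤ d) (hp : Rep c d f f₀) (hq : Rep c d g g₀) :
    Rep c d (fun t => f t * g t) (fun s => f₀ s * g s + f s * g₀ s) := by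
  have h1 := (hp.add hq).sq hcd
  have h2 := hp.sq hcd
  have h3 := hq.sq hcd
  have h4 := ((h1.sub h2).sub h3).const_mul (1/2)
  exact h4.congr (fun t => by ring) (fun s _ => by ring)




/-- The elementary pointwise inequality. -/
lemma pointwise_bound {α ε ww w' aa bb : ℝ} (hα0 : 0 ≤ α) (hα1 : α < 1) (hε : 0 < ε)
    (hw : 0 ≤ ww) (hineq : (1 - α) * w' ≤ aa * ww + bb * ww ^ α) (hb : 0 ≤ bb) :
    ((1 - α) * (ww + ε) ^ (-α)) * w' ≤
      aa * ((ww + ε) ^ (1 - α)) + (bb + |aa| * ε ^ (1 - α)) := by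
  have hwε : 0 < ww + ε := by linarith
  have hP : 0 < (ww + ε) ^ (-α) := Real.rpow_pos_of_pos hwε _
  have e1 : (ww + ε) * (ww + ε) ^ (-α) = (ww + ε) ^ (1 - α) := by
    rw [show (1:ℝ) - α = 1 + (-α) by ring, Real.rpow_add hwε, Real.rpow_one]
  have e2 : ww * (ww + ε) ^ (-α) = (ww + ε) ^ (1 - α) - ε * (ww + ε) ^ (-α) := by
    calc ww * (ww + ε) ^ (-α) = (ww + ε) * (ww + ε) ^ (-α) - ε * (ww + ε) ^ (-α) := by ring
      _ = (ww + ε) ^ (1 - α) - ε * (ww + ε) ^ (-α) := by rw [e1]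
  have e3 : ε * (ww + ε) ^ (-α) ≤ ε ^ (1 - α) := by
    have h4 : (ww + ε) ^ (-α) ≤ ε ^ (-α) :=
      Real.rpow_le_rpow_of_nonpos hε (by linarith) (neg_nonpos.2 hα0)
    calc ε * (ww + ε) ^ (-α) ≤ ε * ε ^ (-α) := mul_le_mul_of_nonneg_left h4 hε.le
      _ = ε ^ (1 - α) := by
          rw [show (1:ℝ) - α = 1 + (-α) by ring, Real.rpow_add hε, Real.rpow_one]
  have e4 : ww ^ α * (ww + ε) ^ (-α) ≤ 1 := by
    have h5 : ww ^ α ≤ (ww + ε) ^ α := Real.rpow_le_rpow hw (by linarith) hα0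
    calc ww ^ α * (ww + ε) ^ (-α) ≤ (ww + ε) ^ α * (ww + ε) ^ (-α) :=
          mul_le_mul_of_nonneg_right h5 hP.le
      _ = 1 := by rw [← Real.rpow_add hwε]; simp
  have t1 : aa * (ww * (ww + ε) ^ (-α)) ≤ aa * (ww + ε) ^ (1 - α) + |aa| * ε ^ (1 - α) := by
    rw [e2, mul_sub]
    have h6 : -(aa * (ε * (ww + ε) ^ (-α))) ≤ |aa| * ε ^ (1 - α) := by
      calc -(aa * (ε * (ww + ε) ^ (-α))) = (-aa) * (ε * (ww + ε) ^ (-α)) := by ring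
        _ ≤ |aa| * (ε * (ww + ε) ^ (-α)) :=
            mul_le_mul_of_nonneg_right (neg_le_abs aa) (by positivity)
        _ ≤ |aa| * ε ^ (1 - α) := mul_le_mul_of_nonneg_left e3 (abs_nonneg _)
    linarith
  have t2 : bb * (ww ^ α * (ww + ε) ^ (-α)) ≤ bb := by
    calc bb * (ww ^ α * (ww + ε) ^ (-α)) ≤ bb * 1 := mul_le_mul_of_nonneg_left e4 hb
      _ = bb := mul_one _
  calc ((1 - α) * (ww + ε) ^ (-α)) * w' = (ww + ε) ^ (-α) * ((1 - α) * w') := by ring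
    _ ≤ (ww + ε) ^ (-α) * (aa * ww + bb * ww ^ α) := mul_le_mul_of_nonneg_left hineq hP.le
    _ = aa * (ww * (ww + ε) ^ (-α)) + bb * (ww ^ α * (ww + ε) ^ (-α)) := by ring
    _ ≤ aa * ((ww + ε) ^ (1 - α)) + (bb + |aa| * ε ^ (1 - α)) := by linarith

lemma rpow_subadd {x ε α : ℝ} (hx : 0 ≤ x) (hε : 0 ≤ ε) (hα0 : 0 ≤ α) (hα1 : α < 1) :
    (x + ε) ^ (1 - α) ≤ x ^ (1 - α) + ε ^ (1 - α) := by
  have h := NNReal.rpow_add_le_add_rpow (⟨x, hx⟩ : NNReal) (⟨ε, hε⟩ : NNReal)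
    (by linarith : (0:ℝ) ≤ 1 - α) (by linarith : 1 - α ≤ 1)
  rw [← NNReal.coe_le_coe] at h
  push_cast at h
  exact h


end GronA

open GronA intervalIntegral


/-- Generalized Gronwall inequality (Lemma 2.1 of the paper): if an absolutely continuous
nonnegative function `w` (encoded via its a.e. derivative `w'` and the fundamental theorem
of calculus) satisfies `(1−α) w′(t) ≤ a(t) w(t) + b(t) w(t)^α` a.e. on `[t₀, t₀+T]`,
with `a, b` integrable, `b ≥ 0` a.e. and `0 ≤ α < 1`, then
`w(t)^{1−α} ≤ w(t₀)^{1−α} e^{∫_{t₀}^t a} + ∫_{t₀}^t e^{∫_s^t a} b(s) ds`. -/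
theorem stmt1 (t₀ T : ℝ) (hT : 0 < T) (a b : ℝ → ℝ)
    (ha : IntegrableOn a (Set.Icc t₀ (t₀ + T)))
    (hb : IntegrableOn b (Set.Icc t₀ (t₀ + T)))
    (hb0 : ∀ᵐ t ∂(volume.restrict (Set.Icc t₀ (t₀ + T))), 0 ≤ b t)
    (α : ℝ) (hα0 : 0 ≤ α) (hα1 : α < 1)
    (w w' : ℝ → ℝ)
    (hw0 : ∀ t ∈ Set.Icc t₀ (t₀ + T), 0 ≤ w t)
    (hw'int : IntegrableOn w' (Set.Icc t₀ (t₀ + T)))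
    (hw'deriv : ∀ᵐ t ∂(volume.restrict (Set.Icc t₀ (t₀ + T))), HasDerivAt w (w' t) t)
    (hac : ∀ t ∈ Set.Icc t₀ (t₀ + T), w t = w t₀ + ∫ s in t₀..t, w' s)
    (hineq : ∀ᵐ t ∂(volume.restrict (Set.Icc t₀ (t₀ + T))),
      (1 - α) * w' t ≤ a t * w t + b t * (w t) ^ α) :
    ∀ t ∈ Set.Icc t₀ (t₀ + T),
      (w t) ^ (1 - α) ≤ (w t₀) ^ (1 - α) * Real.exp (∫ τ in t₀..t, a τ)
        + ∫ s in t₀..t, Real.exp (∫ τ in s..t, a τ) * b s := by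
  intro t₁ ht₁
  have hcd : t₀ ≤ t₀ + T := by linarith
  have h01 : t₀ ≤ t₁ := ht₁.1
  have ht₀I : t₀ ∈ Set.Icc t₀ (t₀ + T) := ⟨le_rfl, hcd⟩
  have hsub01 : Set.Icc t₀ t₁ ⊆ Set.Icc t₀ (t₀ + T) := Set.Icc_subset_Icc_right ht₁.2
  -- W : the continuous representative of w
  obtain ⟨W, hWdef⟩ : ∃ W : ℝ → ℝ, W = fun t => w t₀ + ∫ s in t₀..t, w' s := ⟨_, rfl⟩
  have hW : Rep t₀ (t₀ + T) W w' := by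
    refine ⟨hw'int, fun t ht => ?_⟩
    rw [hWdef]
    simp
  have hWw : ∀ t ∈ Set.Icc t₀ (t₀ + T), W t = w t := fun t ht => by rw [hWdef]; exact (hac t ht).symm
  have hW0 : ∀ t ∈ Set.Icc t₀ (t₀ + T), 0 ≤ W t := fun t ht => (hWw t ht) ▸ hw0 t ht
  obtain ⟨M, hM⟩ := isCompact_Icc.exists_bound_of_continuousOn (hW.continuousOn hcd)
  -- A : primitive of a, E = exp (-A)
  obtain ⟨A, hAdef⟩ : ∃ A : ℝ → ℝ, A = fun t => ∫ s in t₀..t, a s := ⟨_, rfl⟩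
  have hA : Rep t₀ (t₀ + T) A a := ⟨ha, fun t ht => by rw [hAdef]; simp⟩
  obtain ⟨R, hR⟩ := isCompact_Icc.exists_bound_of_continuousOn (hA.continuousOn hcd)
  have hA0 : A t₀ = 0 := by rw [hAdef]; simp
  obtain ⟨E, hEdef⟩ : ∃ E : ℝ → ℝ, E = fun t => Real.exp (-(A t)) := ⟨_, rfl⟩
  have hE : Rep t₀ (t₀ + T) E (fun s => (-(Real.exp (-(A s)))) * a s) := by
    rw [hEdef]
    apply Rep.comp hcd hA (φ := fun y => Real.exp (-y)) (φ' := fun y => -Real.exp (-y))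
      (U := Metric.ball (0:ℝ) (R+1)) (δ := 1) (C := Real.exp (R+1)) one_pos
    · intro t ht x hx
      rw [Metric.mem_ball] at hx ⊢
      have h1 : dist x 0 ≤ dist x (A t) + dist (A t) 0 := dist_triangle _ _ _
      have h2 : dist (A t) 0 ≤ R := by
        rw [Real.dist_eq, sub_zero, ← Real.norm_eq_abs]
        exact hR t ht
      linarith
    · intro x _
      have h1 : HasDerivAt (fun y : ℝ => -y) (-1) x := (hasDerivAt_id x).neg
      have h2 := (Real.hasDerivAt_exp (-x)).comp x h1
      exact h2.congr_deriv (by ring)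
    · exact ((Real.continuous_exp.comp continuous_neg).neg).continuousOn
    · intro x hx
      rw [Metric.mem_ball, Real.dist_eq, sub_zero] at hx
      rw [abs_neg, abs_of_pos (Real.exp_pos _)]
      apply Real.exp_le_exp.2
      rcases abs_lt.1 hx with ⟨hx1, hx2⟩
      linarith
  have hEpos : ∀ s, 0 < E s := fun s => by rw [hEdef]; exact Real.exp_pos _
  -- the weight function for the target integral
  have hecont : ContinuousOn (fun s => Real.exp (∫ τ in s..t₁, a τ)) (Set.Icc t₀ t₁) := by
    apply Real.continuous_exp.comp_continuousOn
    have hia : IntegrableOn a (Set.uIcc t₀ t₁) := by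
      rw [Set.uIcc_of_le h01]
      exact ha.mono_set hsub01
    have := intervalIntegral.continuousOn_primitive_interval_left (a := t₀) (b := t₁)
      (μ := volume) (f := a) hia
    rwa [Set.uIcc_of_le h01] at this
  have hbI : IntegrableOn b (Set.Icc t₀ t₁) := hb.mono_set hsub01
  have haI : IntegrableOn (fun s => |a s|) (Set.Icc t₀ t₁) := (ha.mono_set hsub01).abs
  have heb : IntegrableOn (fun s => Real.exp (∫ τ in s..t₁, a τ) * b s) (Set.Icc t₀ t₁) :=
    IntegrableOn.continuousOn_mul hecont hbI isCompact_Icc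
  have hea : IntegrableOn (fun s => Real.exp (∫ τ in s..t₁, a τ) * |a s|) (Set.Icc t₀ t₁) :=
    IntegrableOn.continuousOn_mul hecont haI isCompact_Icc
  have hebi : IntervalIntegrable (fun s => Real.exp (∫ τ in s..t₁, a τ) * b s) volume t₀ t₁ := by
    rw [intervalIntegrable_iff_integrableOn_Ioc_of_le h01]
    exact heb.mono_set Set.Ioc_subset_Icc_self
  have heai : IntervalIntegrable (fun s => Real.exp (∫ τ in s..t₁, a τ) * |a s|) volume t₀ t₁ := by
    rw [intervalIntegrable_iff_integrableOn_Ioc_of_le h01]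
    exact hea.mono_set Set.Ioc_subset_Icc_self
  obtain ⟨K, hKdef⟩ : ∃ K : ℝ,
      K = Real.exp (A t₁) + ∫ s in t₀..t₁, Real.exp (∫ τ in s..t₁, a τ) * |a s| := ⟨_, rfl⟩
  have hK0 : 0 ≤ K := by
    rw [hKdef]
    apply add_nonneg (Real.exp_pos _).le
    apply intervalIntegral.integral_nonneg h01
    intro u _
    positivity
  -- the key estimate, for every ε > 0
  have key : ∀ ε : ℝ, 0 < ε →
      (w t₁) ^ (1 - α) ≤ ((w t₀) ^ (1 - α) * Real.exp (A t₁)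
        + ∫ s in t₀..t₁, Real.exp (∫ τ in s..t₁, a τ) * b s) + ε ^ (1 - α) * K := by
    intro ε hε
    -- chain rule : v = (W + ε)^(1-α)
    have hv : Rep t₀ (t₀ + T) (fun t => (W t + ε) ^ (1 - α))
        (fun s => ((1 - α) * (W s + ε) ^ (-α)) * w' s) := by
      apply Rep.comp hcd hW (φ := fun x => (x + ε) ^ (1 - α))
        (φ' := fun x => (1 - α) * (x + ε) ^ (-α))
        (U := Set.Ioo (-(ε/2)) (M+1)) (δ := min (ε/2) 1)
        (C := (1 - α) * (ε/2) ^ (-α)) (lt_min (half_pos hε) one_pos)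
      · intro t ht x hx
        rw [Metric.mem_ball, Real.dist_eq] at hx
        rcases abs_lt.1 hx with ⟨hx1, hx2⟩
        have h2 : 0 ≤ W t := hW0 t ht
        have h3 : W t ≤ M := le_trans (le_abs_self _)
          (by rw [← Real.norm_eq_abs]; exact hM t ht)
        have hd1 : x - W t < ε/2 := lt_of_lt_of_le hx2 (min_le_left _ _)
        have hd2 : -(ε/2) < x - W t := lt_of_le_of_lt (neg_le_neg (min_le_left _ _)) hx1
        have hd3 : x - W t < 1 := lt_of_lt_of_le hx2 (min_le_right _ _)
        refine ⟨?_, ?_⟩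
        · linarith
        · linarith
      · intro x hx
        have hxε : x + ε ≠ 0 := by
          have h1 : -(ε/2) < x := hx.1
          have h2 : 0 < x + ε := by linarith
          exact ne_of_gt h2
        have h2 := (Real.hasDerivAt_rpow_const (x := x + ε) (p := 1 - α)
          (Or.inl hxε)).comp x ((hasDerivAt_id x).add_const ε)
        have h3 : (1:ℝ) - α - 1 = -α := by ring
        exact h2.congr_deriv (by rw [h3]; ring)
      · intro x hx
        have hxε : x + ε ≠ 0 := by
          have h1 : -(ε/2) < x := hx.1
          have : 0 < x + ε := by linarith
          exact ne_of_gt this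
        apply ContinuousAt.continuousWithinAt
        apply ContinuousAt.mul continuousAt_const
        exact ContinuousAt.rpow_const (continuousAt_id.add continuousAt_const) (Or.inl hxε)
      · intro x hx
        have h1 : -(ε/2) < x := hx.1
        have h2 : (0:ℝ) < ε/2 := half_pos hε
        have h3 : (x + ε) ^ (-α) ≤ (ε/2) ^ (-α) :=
          Real.rpow_le_rpow_of_nonpos h2 (by linarith) (neg_nonpos.2 hα0)
        rw [abs_of_nonneg (mul_nonneg (by linarith) (Real.rpow_nonneg (by linarith) _))]
        exact mul_le_mul_of_nonneg_left h3 (by linarith)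
    -- product : h = v * E
    have hh := Rep.mul hcd hv hE
    -- a.e. bound for the integrand of h
    have hae : ∀ᵐ s ∂(volume.restrict (Set.Icc t₀ (t₀ + T))),
        (((1 - α) * (W s + ε) ^ (-α)) * w' s) * E s
          + ((W s + ε) ^ (1 - α)) * ((-(Real.exp (-(A s)))) * a s)
        ≤ E s * (b s + |a s| * ε ^ (1 - α)) := by
      filter_upwards [hineq, hb0, ae_restrict_mem measurableSet_Icc] with s h1 h2 h3
      have hws : W s = w s := hWw s h3
      rw [hws]
      have h5 := pointwise_bound hα0 hα1 hε (hw0 s h3) h1 h2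
      have hEs : 0 < E s := hEpos s
      have hEexp : E s = Real.exp (-(A s)) := by rw [hEdef]
      calc (((1 - α) * (w s + ε) ^ (-α)) * w' s) * E s
            + ((w s + ε) ^ (1 - α)) * ((-(Real.exp (-(A s)))) * a s)
          = E s * ((((1 - α) * (w s + ε) ^ (-α)) * w' s)
              - a s * ((w s + ε) ^ (1 - α))) := by rw [← hEexp]; ring
        _ ≤ E s * (b s + |a s| * ε ^ (1 - α)) := by
            apply mul_le_mul_of_nonneg_left _ hEs.le
            linarith
    -- integrate the bound on [t₀, t₁]
    have ht₁I : t₁ ∈ Set.Icc t₀ (t₀ + T) := ht₁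
    have heq := hh.2 t₁ ht₁I
    have hint1 : IntervalIntegrable (fun s =>
        (((1 - α) * (W s + ε) ^ (-α)) * w' s) * E s
          + ((W s + ε) ^ (1 - α)) * ((-(Real.exp (-(A s)))) * a s)) volume t₀ t₁ :=
      ii_of_integrableOn hh.1 ht₀I ht₁I
    have hEcont : ContinuousOn E (Set.Icc t₀ t₁) := (hE.continuousOn hcd).mono hsub01
    have hint2 : IntervalIntegrable (fun s => E s * (b s + |a s| * ε ^ (1 - α))) volume t₀ t₁ := by
      rw [intervalIntegrable_iff_integrableOn_Ioc_of_le h01]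
      apply IntegrableOn.mono_set _ Set.Ioc_subset_Icc_self
      exact IntegrableOn.continuousOn_mul hEcont
        (hbI.add (haI.mul_const _)) isCompact_Icc
    have hmono := intervalIntegral.integral_mono_ae_restrict h01 hint1 hint2
      (ae_restrict_of_ae_restrict_of_subset hsub01 hae)
    -- multiply through by X = exp (A t₁)
    obtain ⟨X, hXdef⟩ : ∃ X : ℝ, X = Real.exp (A t₁) := ⟨_, rfl⟩
    have hXpos : 0 < X := by rw [hXdef]; exact Real.exp_pos _
    have hEX : E t₁ * X = 1 := by
      rw [hEdef, hXdef]
      show Real.exp (-(A t₁)) * Real.exp (A t₁) = 1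
      rw [← Real.exp_add]
      simp
    have hXE : ∀ s ∈ Set.Icc t₀ t₁, X * E s = Real.exp (∫ τ in s..t₁, a τ) := by
      intro s hs
      have hsI : s ∈ Set.Icc t₀ (t₀ + T) := hsub01 hs
      have hadd : (∫ τ in t₀..s, a τ) + ∫ τ in s..t₁, a τ = ∫ τ in t₀..t₁, a τ :=
        intervalIntegral.integral_add_adjacent_intervals
          (ii_of_integrableOn ha ht₀I hsI) (ii_of_integrableOn ha hsI ht₁I)
      have hAs : A s = ∫ τ in t₀..s, a τ := by rw [hAdef]
      have hAt : A t₁ = ∫ τ in t₀..t₁, a τ := by rw [hAdef]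
      rw [hXdef, hEdef]
      show Real.exp (A t₁) * Real.exp (-(A s)) = _
      rw [← Real.exp_add]
      congr 1
      linarith
    have hXint : X * (∫ s in t₀..t₁, E s * (b s + |a s| * ε ^ (1 - α)))
        = (∫ s in t₀..t₁, Real.exp (∫ τ in s..t₁, a τ) * b s)
          + ε ^ (1 - α) * ∫ s in t₀..t₁, Real.exp (∫ τ in s..t₁, a τ) * |a s| := by
      rw [← intervalIntegral.integral_const_mul]
      have hcongr : ∀ s ∈ Set.uIcc t₀ t₁,
          X * (E s * (b s + |a s| * ε ^ (1 - α)))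
          = Real.exp (∫ τ in s..t₁, a τ) * b s
            + ε ^ (1 - α) * (Real.exp (∫ τ in s..t₁, a τ) * |a s|) := by
        intro s hs
        rw [Set.uIcc_of_le h01] at hs
        have := hXE s hs
        calc X * (E s * (b s + |a s| * ε ^ (1 - α)))
            = (X * E s) * b s + ε ^ (1 - α) * ((X * E s) * |a s|) := by ring
          _ = _ := by rw [this]
      rw [intervalIntegral.integral_congr hcongr,
        intervalIntegral.integral_add hebi (heai.const_mul _),
        intervalIntegral.integral_const_mul]
    -- final chain
    have hv1 : (w t₁ + ε) ^ (1 - α) * E t₁ ≤ (w t₀ + ε) ^ (1 - α)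
        + ∫ s in t₀..t₁, E s * (b s + |a s| * ε ^ (1 - α)) := by
      have e1 : (W t₁ + ε) ^ (1 - α) * E t₁
          = (W t₀ + ε) ^ (1 - α) * E t₀ + ∫ s in t₀..t₁,
            ((((1 - α) * (W s + ε) ^ (-α)) * w' s) * E s
              + ((W s + ε) ^ (1 - α)) * ((-(Real.exp (-(A s)))) * a s)) := heq
      have e2 : E t₀ = 1 := by
        rw [hEdef]
        show Real.exp (-(A t₀)) = 1
        rw [hA0]
        simp
      rw [hWw t₁ ht₁I, hWw t₀ ht₀I, e2, mul_one] at e1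
      linarith
    have hfin1 : (w t₁ + ε) ^ (1 - α) ≤ ((w t₀ + ε) ^ (1 - α)
        + ∫ s in t₀..t₁, E s * (b s + |a s| * ε ^ (1 - α))) * X := by
      have e3 : (w t₁ + ε) ^ (1 - α) = ((w t₁ + ε) ^ (1 - α) * E t₁) * X := by
        rw [mul_assoc, hEX, mul_one]
      rw [e3]
      exact mul_le_mul_of_nonneg_right hv1 hXpos.le
    have hsubadd : (w t₀ + ε) ^ (1 - α) ≤ (w t₀) ^ (1 - α) + ε ^ (1 - α) :=
      rpow_subadd (hw0 t₀ ht₀I) hε.le hα0 hα1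
    calc (w t₁) ^ (1 - α) ≤ (w t₁ + ε) ^ (1 - α) :=
          Real.rpow_le_rpow (hw0 t₁ ht₁I) (by linarith) (by linarith)
      _ ≤ ((w t₀ + ε) ^ (1 - α)
          + ∫ s in t₀..t₁, E s * (b s + |a s| * ε ^ (1 - α))) * X := hfin1
      _ = (w t₀ + ε) ^ (1 - α) * X
          + X * ∫ s in t₀..t₁, E s * (b s + |a s| * ε ^ (1 - α)) := by ring
      _ ≤ ((w t₀) ^ (1 - α) + ε ^ (1 - α)) * X
          + ((∫ s in t₀..t₁, Real.exp (∫ τ in s..t₁, a τ) * b s)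
            + ε ^ (1 - α) * ∫ s in t₀..t₁, Real.exp (∫ τ in s..t₁, a τ) * |a s|) := by
          rw [← hXint]
          exact add_le_add_left (mul_le_mul_of_nonneg_right hsubadd hXpos.le) _
      _ = ((w t₀) ^ (1 - α) * Real.exp (A t₁)
          + ∫ s in t₀..t₁, Real.exp (∫ τ in s..t₁, a τ) * b s) + ε ^ (1 - α) * K := by
          rw [hKdef, hXdef]
          ring
  -- let ε → 0
  have hbase : (∫ τ in t₀..t₁, a τ) = A t₁ := by rw [hAdef]
  rw [hbase]
  apply le_of_forall_pos_le_add
  intro η hη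
  have hK1 : (0:ℝ) < K + 1 := by linarith
  obtain ⟨ε, hεdef⟩ : ∃ e : ℝ, e = (η / (K + 1)) ^ ((1 - α)⁻¹) := ⟨_, rfl⟩
  have hε : 0 < ε := by rw [hεdef]; exact Real.rpow_pos_of_pos (by positivity) _
  have hεp : ε ^ (1 - α) = η / (K + 1) := by
    rw [hεdef, ← Real.rpow_mul (by positivity), inv_mul_cancel₀ (by linarith : (1:ℝ) - α ≠ 0),
      Real.rpow_one]
  calc (w t₁) ^ (1 - α)
      ≤ ((w t₀) ^ (1 - α) * Real.exp (A t₁)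
        + ∫ s in t₀..t₁, Real.exp (∫ τ in s..t₁, a τ) * b s) + ε ^ (1 - α) * K := key ε hε
    _ ≤ ((w t₀) ^ (1 - α) * Real.exp (A t₁)
        + ∫ s in t₀..t₁, Real.exp (∫ τ in s..t₁, a τ) * b s) + η := by
        apply add_le_add_right
        rw [hεp]
        rw [div_mul_eq_mul_div, div_le_iff₀ hK1]
        nlinarith
end

section
/- Let S ⊂ ℝⁿ be a nonempty closed set and x ∈ ℝⁿ \ S. Then every limiting (Mordukhovich) subgradient of the distance function d_S at x belongs to the set {(x − s)/d_S(x) : s ∈ Π_S(x)}. -/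
open Filter Topology
open scoped RealInnerProductSpace

variable {n : ℕ}

/-- The proximal subdifferential of a real-valued function:
`ξ ∈ ∂_P φ(x)` iff `φ(y) ≥ φ(x) + ⟪ξ, y−x⟫ − σ‖y−x‖²` for `y` near `x`
(equivalently the liminf in the definition is `> −∞`). -/
def proxSubdiff (φ : EuclideanSpace ℝ (Fin n) → ℝ) (x : EuclideanSpace ℝ (Fin n)) :
    Set (EuclideanSpace ℝ (Fin n)) :=
  {ξ | ∃ σ > (0 : ℝ), ∃ δ > (0 : ℝ), ∀ y, ‖y - x‖ ≤ δ →
    φ x + ⟪ξ, y - x⟫ - σ * ‖y - x‖ ^ 2 ≤ φ y}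

/-- The limiting (Mordukhovich) subdifferential: limits of proximal subgradients
`ξₖ ∈ ∂_P φ(xₖ)` with `xₖ → x` and `φ(xₖ) → φ(x)`. -/
def limitingSubdiff (φ : EuclideanSpace ℝ (Fin n) → ℝ) (x : EuclideanSpace ℝ (Fin n)) :
    Set (EuclideanSpace ℝ (Fin n)) :=
  {ξ | ∃ (xs ξs : ℕ → EuclideanSpace ℝ (Fin n)),
    (∀ k, ξs k ∈ proxSubdiff φ (xs k)) ∧ Tendsto xs atTop (𝓝 x) ∧
    Tendsto (fun k => φ (xs k)) atTop (𝓝 (φ x)) ∧ Tendsto ξs atTop (𝓝 ξ)}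

lemma prox_proj (S : Set (EuclideanSpace ℝ (Fin n))) (hS : S.Nonempty) (hcl : IsClosed S)
    (x ξ : EuclideanSpace ℝ (Fin n)) (hx : x ∉ S)
    (hξ : ξ ∈ proxSubdiff (fun y => Metric.infDist y S) x) :
    x - (Metric.infDist x S) • ξ ∈ S ∧
      dist x (x - (Metric.infDist x S) • ξ) = Metric.infDist x S := by
  obtain ⟨σ, hσ, δ, hδ, hineq⟩ := hξ
  set d := Metric.infDist x S with hd_def
  have hd : 0 < d := (hcl.notMem_iff_infDist_pos hS).mp hx
  -- Step 1: ‖ξ‖ ≤ 1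
  have hnorm : ‖ξ‖ ≤ 1 := by
    by_cases h0 : ξ = 0
    · simp [h0]
    have hnξ : 0 < ‖ξ‖ := norm_pos_iff.mpr h0
    have key : ∀ ε > (0:ℝ), ‖ξ‖ ^ 2 ≤ ‖ξ‖ + ε := by
      intro ε hε
      set t : ℝ := min (δ / ‖ξ‖) (ε / (σ * ‖ξ‖ ^ 2)) with ht_def
      have ht : 0 < t := lt_min (div_pos hδ hnξ) (div_pos hε (by positivity))
      have hy1 : ‖(x + t • ξ) - x‖ = t * ‖ξ‖ := by
        rw [add_sub_cancel_left, norm_smul, Real.norm_eq_abs, abs_of_pos ht]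
      have hy2 : ‖(x + t • ξ) - x‖ ≤ δ := by
        rw [hy1]
        calc t * ‖ξ‖ ≤ (δ / ‖ξ‖) * ‖ξ‖ := by
              exact mul_le_mul_of_nonneg_right (min_le_left _ _) hnξ.le
          _ = δ := by field_simp
      have h1 := hineq (x + t • ξ) hy2
      have h2 : Metric.infDist (x + t • ξ) S ≤ d + t * ‖ξ‖ := by
        calc Metric.infDist (x + t • ξ) S ≤ d + dist (x + t • ξ) x :=
              Metric.infDist_le_infDist_add_dist
          _ = d + t * ‖ξ‖ := by rw [dist_eq_norm, hy1]
      have hip : ⟪ξ, (x + t • ξ) - x⟫ = t * ‖ξ‖ ^ 2 := by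
        rw [add_sub_cancel_left, real_inner_smul_right, real_inner_self_eq_norm_sq]
      rw [hip, hy1] at h1
      have htε : σ * ‖ξ‖ ^ 2 * t ≤ ε := by
        have := min_le_right (δ / ‖ξ‖) (ε / (σ * ‖ξ‖ ^ 2))
        calc σ * ‖ξ‖ ^ 2 * t ≤ σ * ‖ξ‖ ^ 2 * (ε / (σ * ‖ξ‖ ^ 2)) := by
              exact mul_le_mul_of_nonneg_left this (by positivity)
          _ = ε := by field_simp
      nlinarith [h1.trans h2]
    have h2 : ‖ξ‖ ^ 2 ≤ ‖ξ‖ := le_of_forall_pos_le_add key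
    nlinarith
  -- projection
  obtain ⟨s', hs'S, hs'd⟩ := hcl.exists_infDist_eq_dist hS x
  have hxs' : ‖x - s'‖ = d := by rw [← dist_eq_norm, ← hs'd]
  -- Step 2: d ≤ ⟪ξ, x - s'⟫
  have hinner : d ≤ ⟪ξ, x - s'⟫ := by
    have key : ∀ ε > (0:ℝ), d ≤ ⟪ξ, x - s'⟫ + ε := by
      intro ε hε
      set t : ℝ := min (min (δ / d) 1) (ε / (σ * d ^ 2)) with ht_def
      have ht : 0 < t :=
        lt_min (lt_min (div_pos hδ hd) one_pos) (div_pos hε (by positivity))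
      have ht1 : t ≤ 1 := le_trans (min_le_left _ _) (min_le_right _ _)
      have hy1 : ‖(x + t • (s' - x)) - x‖ = t * d := by
        rw [add_sub_cancel_left, norm_smul, Real.norm_eq_abs, abs_of_pos ht,
          norm_sub_rev, hxs']
      have hy2 : ‖(x + t • (s' - x)) - x‖ ≤ δ := by
        rw [hy1]
        calc t * d ≤ (δ / d) * d := mul_le_mul_of_nonneg_right
              (le_trans (min_le_left _ _) (min_le_left _ _)) hd.le
          _ = δ := by field_simp
      have h1 := hineq (x + t • (s' - x)) hy2
      have h2 : Metric.infDist (x + t • (s' - x)) S ≤ (1 - t) * d := by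
        calc Metric.infDist (x + t • (s' - x)) S ≤ dist (x + t • (s' - x)) s' :=
              Metric.infDist_le_dist_of_mem hs'S
          _ = ‖(1 - t) • (x - s')‖ := by
              rw [dist_eq_norm]; congr 1; module
          _ = (1 - t) * d := by
              rw [norm_smul, Real.norm_eq_abs, abs_of_nonneg (by linarith), hxs']
      have hip : ⟪ξ, (x + t • (s' - x)) - x⟫ = -(t * ⟪ξ, x - s'⟫) := by
        rw [add_sub_cancel_left]
        have : t • (s' - x) = -(t • (x - s')) := by module
        rw [this, inner_neg_right, real_inner_smul_right]
      rw [hip, hy1] at h1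
      have htε : σ * d ^ 2 * t ≤ ε := by
        calc σ * d ^ 2 * t ≤ σ * d ^ 2 * (ε / (σ * d ^ 2)) :=
              mul_le_mul_of_nonneg_left (min_le_right _ _) (by positivity)
          _ = ε := by field_simp
      nlinarith [h1.trans h2]
    exact le_of_forall_pos_le_add key
  -- conclude s' = x - d • ξ
  have hCS : ⟪ξ, x - s'⟫ ≤ d := by
    calc ⟪ξ, x - s'⟫ ≤ ‖ξ‖ * ‖x - s'‖ := real_inner_le_norm _ _
      _ ≤ 1 * d := by rw [hxs']; exact mul_le_mul_of_nonneg_right hnorm hd.le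
      _ = d := one_mul d
  have hzero : (x - s') - d • ξ = 0 := by
    have hsq : ‖(x - s') - d • ξ‖ ^ 2 ≤ 0 := by
      rw [← real_inner_self_eq_norm_sq]
      have hexp : ⟪(x - s') - d • ξ, (x - s') - d • ξ⟫ =
          ‖x - s'‖ ^ 2 - 2 * d * ⟪ξ, x - s'⟫ + d ^ 2 * ‖ξ‖ ^ 2 := by
        rw [inner_sub_sub_self]
        rw [real_inner_smul_right, real_inner_smul_left, real_inner_smul_left,
          real_inner_smul_right, real_inner_self_eq_norm_sq, real_inner_self_eq_norm_sq,
          real_inner_comm (x - s') ξ]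
        ring
      rw [hexp, hxs']
      have hx1 : ‖ξ‖ ^ 2 ≤ 1 := by nlinarith [norm_nonneg ξ]
      nlinarith [mul_le_mul_of_nonneg_left hinner (by positivity : (0:ℝ) ≤ 2 * d),
        mul_le_mul_of_nonneg_left hx1 (sq_nonneg d)]
    have := norm_nonneg ((x - s') - d • ξ)
    have h0 : ‖(x - s') - d • ξ‖ = 0 := by nlinarith
    exact norm_eq_zero.mp h0
  have hs'eq : x - d • ξ = s' := by
    have : x - s' = d • ξ := by
      have := sub_eq_zero.mp hzero; exact this
    have h := this; rw [sub_eq_iff_eq_add] at h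
    rw [h]; abel
  rw [hs'eq]
  exact ⟨hs'S, hs'd.symm⟩

/-- Every limiting subgradient of the distance function `d_S` at `x ∉ S` has the form
`(x − s)/d_S(x)` with `s ∈ Π_S(x)`. -/
theorem stmt5 (S : Set (EuclideanSpace ℝ (Fin n))) (hS : S.Nonempty) (hcl : IsClosed S)
    (x : EuclideanSpace ℝ (Fin n)) (hx : x ∉ S) :
    limitingSubdiff (fun y => Metric.infDist y S) x ⊆
      {ξ | ∃ s ∈ S, dist x s = Metric.infDist x S ∧
        ξ = (Metric.infDist x S)⁻¹ • (x - s)} := by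
  intro ξ hξ
  obtain ⟨xs, ξs, hP, hxs, hφ, hξs⟩ := hξ
  simp only at hφ
  set d := Metric.infDist x S with hd_def
  have hd : 0 < d := (hcl.notMem_iff_infDist_pos hS).mp hx
  have hev : ∀ᶠ k in atTop, xs k ∉ S := by
    have h1 : ∀ᶠ k in atTop, 0 < Metric.infDist (xs k) S :=
      hφ.eventually (eventually_gt_nhds hd)
    exact h1.mono fun k hk => (hcl.notMem_iff_infDist_pos hS).mpr hk
  set s : ℕ → EuclideanSpace ℝ (Fin n) :=
    fun k => xs k - (Metric.infDist (xs k) S) • ξs k with hs_def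
  have hslim : Tendsto s atTop (𝓝 (x - d • ξ)) := hxs.sub (hφ.smul hξs)
  have hmem : ∀ᶠ k in atTop, s k ∈ S ∧
      dist (xs k) (s k) = Metric.infDist (xs k) S :=
    hev.mono fun k hk => prox_proj S hS hcl _ _ hk (hP k)
  have hsS : x - d • ξ ∈ S := hcl.mem_of_tendsto hslim (hmem.mono fun k h => h.1)
  have hdist : dist x (x - d • ξ) = d := by
    have h1 : Tendsto (fun k => dist (xs k) (s k)) atTop (𝓝 (dist x (x - d • ξ))) :=
      hxs.dist hslim
    have h2 : Tendsto (fun k => dist (xs k) (s k)) atTop (𝓝 d) :=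
      hφ.congr' (hmem.mono fun k h => h.2.symm)
    exact tendsto_nhds_unique h1 h2
  refine ⟨x - d • ξ, hsS, hdist, ?_⟩
  have h3 : x - (x - d • ξ) = d • ξ := by module
  rw [h3, smul_smul, inv_mul_cancel₀ hd.ne', one_smul]
end

section
/- Let S ⊂ ℝⁿ be nonempty closed and x ∈ ℝⁿ \ S. Then the Clarke subdifferential of the distance function d_S at x is contained in the closed convex hull of {(x − s)/d_S(x) : s ∈ Π_S(x)}. -/
open Filter Topology
open scoped RealInnerProductSpace

variable {n : ℕ}

lemma prox_dist {S : Set (EuclideanSpace ℝ (Fin n))} (hS : S.Nonempty) (hcl : IsClosed S)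
    {y ξ : EuclideanSpace ℝ (Fin n)} (hy : y ∉ S)
    (hξ : ξ ∈ proxSubdiff (fun z => Metric.infDist z S) y) :
    ∃ s ∈ S, dist y s = Metric.infDist y S ∧ ξ = (Metric.infDist y S)⁻¹ • (y - s) := by
  obtain ⟨σ, hσ, δ, hδ, hP⟩ := hξ
  simp only at hP
  set d : ℝ := Metric.infDist y S with hd'
  have hd : 0 < d := (hcl.notMem_iff_infDist_pos hS).mp hy
  obtain ⟨s, hsS, hds⟩ := hcl.exists_infDist_eq_dist hS y
  -- Step B : ∀ v, ⟪ξ, v⟫ ≤ ‖v‖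
  have stepB : ∀ v : EuclideanSpace ℝ (Fin n), ⟪ξ, v⟫ ≤ ‖v‖ := by
    intro v
    rcases eq_or_ne v 0 with rfl | hv
    · simp
    have hv0 : 0 < ‖v‖ := norm_pos_iff.mpr hv
    have htend : Tendsto (fun t : ℝ => ‖v‖ + σ * t * ‖v‖ ^ 2) (𝓝[>] (0:ℝ))
        (𝓝 ‖v‖) := by
      have : Tendsto (fun t : ℝ => ‖v‖ + σ * t * ‖v‖ ^ 2) (𝓝 (0:ℝ))
          (𝓝 (‖v‖ + σ * 0 * ‖v‖ ^ 2)) := by apply Continuous.tendsto; continuity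
      simpa using this.mono_left nhdsWithin_le_nhds
    refine ge_of_tendsto htend ?_
    filter_upwards [Ioo_mem_nhdsGT_of_mem (Set.left_mem_Ico.mpr (by positivity :
        (0:ℝ) < δ / ‖v‖))] with t ht
    obtain ⟨ht0, ht1⟩ := ht
    have hnorm : ‖(y + t • v) - y‖ = t * ‖v‖ := by
      rw [add_sub_cancel_left, norm_smul, Real.norm_eq_abs, abs_of_pos ht0]
    have h1 := hP (y + t • v) (by rw [hnorm]; exact ((lt_div_iff₀ hv0).mp ht1).le)
    rw [add_sub_cancel_left, real_inner_smul_right, ← add_sub_cancel_left y (t • v), hnorm,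
      add_sub_cancel_left] at h1
    have h2 : Metric.infDist (y + t • v) S ≤ d + t * ‖v‖ := by
      have h := Metric.infDist_le_infDist_add_dist (x := y + t • v) (y := y) (s := S)
      rw [dist_eq_norm, hnorm] at h
      exact h
    have h4 : t * ⟪ξ, v⟫ ≤ t * (‖v‖ + σ * t * ‖v‖ ^ 2) := by nlinarith [h1, h2]
    exact le_of_mul_le_mul_left h4 ht0
  -- Step A : ⟪ξ, s - y⟫ ≤ -d
  have hnys : ‖y - s‖ = d := by rw [← dist_eq_norm, ← hds]
  have hsy : ‖s - y‖ = d := by rw [norm_sub_rev, hnys]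
  have stepA : ⟪ξ, s - y⟫ ≤ -d := by
    have htend : Tendsto (fun t : ℝ => -d + σ * t * d ^ 2) (𝓝[>] (0:ℝ)) (𝓝 (-d)) := by
      have : Tendsto (fun t : ℝ => -d + σ * t * d ^ 2) (𝓝 (0:ℝ))
          (𝓝 (-d + σ * 0 * d ^ 2)) := by apply Continuous.tendsto; continuity
      simpa using this.mono_left nhdsWithin_le_nhds
    refine ge_of_tendsto htend ?_
    filter_upwards [Ioo_mem_nhdsGT_of_mem (Set.left_mem_Ico.mpr (by positivity :
        (0:ℝ) < min 1 (δ / d)))] with t ht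
    obtain ⟨ht0, htm⟩ := ht
    have ht1 : t < 1 := lt_of_lt_of_le htm (min_le_left _ _)
    have htd : t * d ≤ δ := by
      have h := lt_of_lt_of_le htm (min_le_right _ _)
      have := (lt_div_iff₀ hd).mp h
      linarith
    have hnorm : ‖(y + t • (s - y)) - y‖ = t * d := by
      rw [add_sub_cancel_left, norm_smul, Real.norm_eq_abs, abs_of_pos ht0, hsy]
    have h1 := hP (y + t • (s - y)) (by rw [hnorm]; exact htd)
    rw [add_sub_cancel_left, real_inner_smul_right,
      ← add_sub_cancel_left y (t • (s - y)), hnorm, add_sub_cancel_left] at h1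
    have h2 : Metric.infDist (y + t • (s - y)) S ≤ (1 - t) * d := by
      have hzs : (y + t • (s - y)) - s = (1 - t) • (y - s) := by module
      calc Metric.infDist (y + t • (s - y)) S ≤ dist (y + t • (s - y)) s :=
            Metric.infDist_le_dist_of_mem hsS
        _ = (1 - t) * d := by
            rw [dist_eq_norm, hzs, norm_smul, Real.norm_eq_abs,
              abs_of_pos (by linarith : (0:ℝ) < 1 - t), hnys]
    have h4 : t * ⟪ξ, s - y⟫ ≤ t * (-d + σ * t * d ^ 2) := by nlinarith [h1, h2]
    exact le_of_mul_le_mul_left h4 ht0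
  -- equality case
  have hineq1 : d ≤ ⟪ξ, y - s⟫ := by
    have h : ⟪ξ, s - y⟫ = -⟪ξ, y - s⟫ := by
      rw [show s - y = -(y - s) by abel, inner_neg_right]
    rw [h] at stepA; linarith
  have hnξ : ‖ξ‖ ≤ 1 := by
    have h := stepB ξ
    rw [real_inner_self_eq_norm_sq] at h
    nlinarith [norm_nonneg ξ]
  have hcs : ⟪ξ, y - s⟫ ≤ ‖ξ‖ * ‖y - s‖ := real_inner_le_norm _ _
  rw [hnys] at hcs
  have hξ1 : ‖ξ‖ = 1 := le_antisymm hnξ (by nlinarith)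
  have heq : ⟪ξ, y - s⟫ = ‖ξ‖ * ‖y - s‖ := by
    rw [hξ1, one_mul, hnys]; nlinarith
  have hkey := inner_eq_norm_mul_iff_real.mp heq
  rw [hξ1, one_smul, hnys] at hkey
  refine ⟨s, hsS, hds.symm, ?_⟩
  rw [← hkey, smul_smul, inv_mul_cancel₀ (ne_of_gt hd), one_smul]

/-- The Clarke subdifferential of the distance function `d_S` at `x ∉ S` (which, `d_S`
being Lipschitz, is the closed convex hull of the limiting subdifferential) is contained
in the closed convex hull of `{(x − s)/d_S(x) : s ∈ Π_S(x)}`. -/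
theorem stmt6 (S : Set (EuclideanSpace ℝ (Fin n))) (hS : S.Nonempty) (hcl : IsClosed S)
    (x : EuclideanSpace ℝ (Fin n)) (hx : x ∉ S) :
    closure (convexHull ℝ (limitingSubdiff (fun y => Metric.infDist y S) x)) ⊆
      closure (convexHull ℝ
        {ξ | ∃ s ∈ S, dist x s = Metric.infDist x S ∧
          ξ = (Metric.infDist x S)⁻¹ • (x - s)}) := by
  set B := {ξ : EuclideanSpace ℝ (Fin n) | ∃ s ∈ S, dist x s = Metric.infDist x S ∧
    ξ = (Metric.infDist x S)⁻¹ • (x - s)} with hB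
  have hmain : limitingSubdiff (fun y => Metric.infDist y S) x ⊆ B := by
    rintro ξ ⟨xs, ξs, hprox, hxs, hφ, hξs⟩
    have hd : 0 < Metric.infDist x S := (hcl.notMem_iff_infDist_pos hS).mp hx
    have hev : ∀ᶠ k in atTop, 0 < Metric.infDist (xs k) S :=
      hφ.eventually (eventually_gt_nhds hd)
    set sfun : ℕ → EuclideanSpace ℝ (Fin n) :=
      fun k => xs k - (Metric.infDist (xs k) S) • ξs k with hsfun
    have hskey : ∀ᶠ k in atTop, sfun k ∈ S ∧
        dist (xs k) (sfun k) = Metric.infDist (xs k) S := by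
      filter_upwards [hev] with k hk
      have hxk : xs k ∉ S := by
        intro hmem
        rw [Metric.infDist_zero_of_mem hmem] at hk
        exact lt_irrefl 0 hk
      obtain ⟨s, hsS, hds, hξeq⟩ := prox_dist hS hcl hxk (hprox k)
      have hsf : sfun k = s := by
        rw [hsfun]
        simp only
        rw [hξeq, smul_smul, mul_inv_cancel₀ (ne_of_gt hk), one_smul]
        abel
      rw [hsf]
      exact ⟨hsS, hds⟩
    have hsf_tend : Tendsto sfun atTop (𝓝 (x - (Metric.infDist x S) • ξ)) :=
      hxs.sub (hφ.smul hξs)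
    set s₀ := x - (Metric.infDist x S) • ξ with hs₀
    have hs₀S : s₀ ∈ S :=
      hcl.mem_of_tendsto hsf_tend (hskey.mono fun k hk => hk.1)
    have hdist : dist x s₀ = Metric.infDist x S := by
      have h1 : Tendsto (fun k => dist (xs k) (sfun k)) atTop (𝓝 (dist x s₀)) :=
        hxs.dist hsf_tend
      have h2 : Tendsto (fun k => dist (xs k) (sfun k)) atTop (𝓝 (Metric.infDist x S)) :=
        hφ.congr' (hskey.mono fun k hk => hk.2.symm)
      exact tendsto_nhds_unique h1 h2
    refine ⟨s₀, hs₀S, hdist, ?_⟩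
    rw [hs₀, sub_sub_cancel, smul_smul, inv_mul_cancel₀ (ne_of_gt hd), one_smul]
  have hconv : Convex ℝ (closure (convexHull ℝ B)) := (convex_convexHull ℝ B).closure
  refine closure_minimal (convexHull_min ?_ hconv) isClosed_closure
  exact hmain.trans ((subset_convexHull ℝ B).trans subset_closure)
end

section
/- Let V : ℝⁿ → ℝ ∪ {+∞} be proper lsc, x₀ ∈ dom V, a ≥ 0, and ξ ∈ ∂_{P,∞} V(x₀), i.e. (ξ, 0) ∈ N^P_{epi V}(x₀, V(x₀)). Suppose x : [0,∞) → ℝⁿ is continuous with x(0) = x₀, right-differentiable at 0 with derivative d, and satisfies V(x(t)) ≤ e^{−at} V(x₀) for all t ≥ 0. Then ⟨ξ, d⟩ ≤ 0. -/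
open Filter Topology
open scoped RealInnerProductSpace

/-- The proximal normal cone to a set `C` at `p`. -/
def proxNormalCone {H : Type*} [NormedAddCommGroup H] [InnerProductSpace ℝ H]
    (C : Set H) (p : H) : Set H :=
  {ζ | ∃ σ > (0 : ℝ), ∀ q ∈ C, ⟪ζ, q - p⟫ ≤ σ * ‖q - p‖ ^ 2}

/-- If `ξ` is a singular (horizontal) proximal subgradient of `V` at `x₀`, i.e.
`(ξ, 0) ∈ N^P_{epi V}(x₀, V(x₀))`, and `x(·)` is a trajectory with `x(0) = x₀`,
right derivative `d` at `0`, satisfying `V(x(t)) ≤ e^{−at}V(x₀)` for all `t ≥ 0`,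
then `⟪ξ, d⟫ ≤ 0`. -/
theorem stmt16 {n : ℕ} (V : EuclideanSpace ℝ (Fin n) → EReal)
    (hlsc : LowerSemicontinuous V) (hbot : ∀ u, V u ≠ ⊥)
    (x₀ : EuclideanSpace ℝ (Fin n)) (hdom : V x₀ ≠ ⊤)
    (a : ℝ) (ha : 0 ≤ a)
    (Epi : Set (WithLp 2 (EuclideanSpace ℝ (Fin n) × ℝ)))
    (hEpi : ∀ q, q ∈ Epi ↔ V ((WithLp.equiv 2 _ q).1) ≤ (((WithLp.equiv 2 _ q).2 : ℝ) : EReal))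
    (P : WithLp 2 (EuclideanSpace ℝ (Fin n) × ℝ))
    (hP1 : (WithLp.equiv 2 _ P).1 = x₀) (hP2 : (WithLp.equiv 2 _ P).2 = (V x₀).toReal)
    (ξ : EuclideanSpace ℝ (Fin n))
    (Z : WithLp 2 (EuclideanSpace ℝ (Fin n) × ℝ))
    (hZ1 : (WithLp.equiv 2 _ Z).1 = ξ) (hZ2 : (WithLp.equiv 2 _ Z).2 = 0)
    (hξ : Z ∈ proxNormalCone Epi P)
    (x : ℝ → EuclideanSpace ℝ (Fin n)) (hx : Continuous x) (hx0 : x 0 = x₀)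
    (d : EuclideanSpace ℝ (Fin n)) (hd : HasDerivWithinAt x d (Set.Ici 0) 0)
    (hlyap : ∀ t : ℝ, 0 ≤ t →
      V (x t) ≤ ((Real.exp (-(a * t)) * (V x₀).toReal : ℝ) : EReal)) :
    ⟪ξ, d⟫ ≤ 0 := by
  classical
  obtain ⟨σ, hσ0, hσ⟩ := hξ
  set c : ℝ := (V x₀).toReal with hc
  -- the trajectory in the epigraph
  set q : ℝ → WithLp 2 (EuclideanSpace ℝ (Fin n) × ℝ) :=
    fun t => (WithLp.equiv 2 _).symm (x t, Real.exp (-(a * t)) * c) with hq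
  have hqmem : ∀ t : ℝ, 0 ≤ t → q t ∈ Epi := by
    intro t ht
    rw [hEpi]
    simpa [hq] using hlyap t ht
  -- the key pointwise inequality
  have key : ∀ t : ℝ, 0 ≤ t →
      ⟪ξ, x t - x₀⟫ ≤ σ * (‖x t - x₀‖ ^ 2 + (Real.exp (-(a * t)) * c - c) ^ 2) := by
    intro t ht
    have h := hσ (q t) (hqmem t ht)
    have hfst : (q t - P).fst = x t - x₀ := by
      rw [WithLp.sub_fst]
      simp [hq, ← hP1]
    have hsnd : (q t - P).snd = Real.exp (-(a * t)) * c - c := by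
      rw [WithLp.sub_snd]
      simp [hq, ← hP2]
    have hinner : ⟪Z, q t - P⟫ = ⟪ξ, x t - x₀⟫ := by
      rw [WithLp.prod_inner_apply, show (q t - P).ofLp.1 = x t - x₀ from hfst,
        show (q t - P).ofLp.2 = Real.exp (-(a * t)) * c - c from hsnd]
      have hZfst : Z.ofLp.1 = ξ := hZ1
      have hZsnd : Z.ofLp.2 = (0 : ℝ) := hZ2
      rw [hZfst, hZsnd, inner_zero_left, add_zero]
    have hnorm : ‖q t - P‖ ^ 2 = ‖x t - x₀‖ ^ 2 + (Real.exp (-(a * t)) * c - c) ^ 2 := by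
      rw [WithLp.prod_norm_sq_eq_of_L2, hfst, hsnd, Real.norm_eq_abs, sq_abs]
    rw [hinner, hnorm] at h
    exact h
  -- slope of x tends to d along 𝓝[>] 0
  have hIci : (Set.Ici (0:ℝ)) \ {0} = Set.Ioi 0 := by
    ext t; simp [Set.mem_Ici, Set.mem_Ioi, lt_iff_le_and_ne, and_comm, eq_comm]
  have hslope : Tendsto (slope x 0) (𝓝[>] (0:ℝ)) (𝓝 d) := by
    have := hasDerivWithinAt_iff_tendsto_slope.mp hd
    rwa [hIci] at this
  -- slope of the exponential term
  set w : ℝ → ℝ := fun s => Real.exp (-(a * s)) * c with hw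
  have hwderiv : HasDerivAt w (Real.exp (-(a * 0)) * (-a) * c) 0 := by
    have h1 : HasDerivAt (fun s : ℝ => -(a * s)) (-a) 0 := by
      have h0 := ((hasDerivAt_id (0:ℝ)).const_mul a).neg
      simp only [mul_one] at h0
      exact h0
    exact ((Real.hasDerivAt_exp _).comp 0 h1).mul_const c
  have hwslope : Tendsto (slope w 0) (𝓝[>] (0:ℝ)) (𝓝 (Real.exp (-(a * 0)) * (-a) * c)) := by
    have := hasDerivAt_iff_tendsto_slope.mp hwderiv
    exact this.mono_left (nhdsWithin_mono _ (by intro t ht; exact ne_of_gt ht))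
  -- the two auxiliary tendsto facts
  have h1 : Tendsto (fun t : ℝ => ⟪ξ, slope x 0 t⟫) (𝓝[>] (0:ℝ)) (𝓝 ⟪ξ, d⟫) :=
    ((continuous_const.inner continuous_id).tendsto d).comp hslope
  have h2 : Tendsto (fun t : ℝ => σ * (t * ‖slope x 0 t‖ ^ 2 + t * (slope w 0 t) ^ 2))
      (𝓝[>] (0:ℝ)) (𝓝 0) := by
    have ht0 : Tendsto (fun t : ℝ => t) (𝓝[>] (0:ℝ)) (𝓝 0) :=
      tendsto_id.mono_left nhdsWithin_le_nhds
    have hA : Tendsto (fun t : ℝ => t * ‖slope x 0 t‖ ^ 2) (𝓝[>] (0:ℝ)) (𝓝 0) := by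
      have := ht0.mul ((hslope.norm.pow 2))
      simpa using this
    have hB : Tendsto (fun t : ℝ => t * (slope w 0 t) ^ 2) (𝓝[>] (0:ℝ)) (𝓝 0) := by
      have := ht0.mul (hwslope.pow 2)
      simpa using this
    have := (hA.add hB).const_mul σ
    simpa using this
  -- eventual inequality
  have hev : ∀ᶠ t in 𝓝[>] (0:ℝ),
      ⟪ξ, slope x 0 t⟫ ≤ σ * (t * ‖slope x 0 t‖ ^ 2 + t * (slope w 0 t) ^ 2) := by
    filter_upwards [self_mem_nhdsWithin] with t ht
    have htpos : (0:ℝ) < t := ht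
    have htne : t ≠ 0 := ne_of_gt htpos
    have hslopex : slope x 0 t = t⁻¹ • (x t - x₀) := by
      rw [slope_def_module, hx0]; simp
    have hslopew : slope w 0 t = t⁻¹ * (Real.exp (-(a * t)) * c - c) := by
      rw [slope_def_field, hw]
      simp [div_eq_inv_mul]
    have hLHS : ⟪ξ, slope x 0 t⟫ = t⁻¹ * ⟪ξ, x t - x₀⟫ := by
      rw [hslopex, real_inner_smul_right]
    have hnormsq : t * ‖slope x 0 t‖ ^ 2 = t⁻¹ * ‖x t - x₀‖ ^ 2 := by
      rw [hslopex, norm_smul, Real.norm_eq_abs, abs_inv, abs_of_pos htpos]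
      field_simp
    have hwsq : t * (slope w 0 t) ^ 2 = t⁻¹ * (Real.exp (-(a * t)) * c - c) ^ 2 := by
      rw [hslopew]
      field_simp
    rw [hLHS, hnormsq, hwsq]
    have := mul_le_mul_of_nonneg_left (key t htpos.le) (inv_nonneg.mpr htpos.le)
    calc t⁻¹ * ⟪ξ, x t - x₀⟫
        ≤ t⁻¹ * (σ * (‖x t - x₀‖ ^ 2 + (Real.exp (-(a * t)) * c - c) ^ 2)) := this
      _ = σ * (t⁻¹ * ‖x t - x₀‖ ^ 2 + t⁻¹ * (Real.exp (-(a * t)) * c - c) ^ 2) := by ring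
  exact le_of_tendsto_of_tendsto h1 h2 hev
end
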